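/- Dispersion bound for the sampled FedProx average. Let v : Fin N → E (the local updates w k⁺), wᵗ ∈ E, μ̄ > 0, 0 ≤ γ, and suppose ‖v k − wᵗ‖ ≤ ((1+γ)/μ̄)·‖∇F k (wᵗ)‖ for every k, and that the local functions are B-dissimilar at wᵗ (∑ k, p k·‖∇F k (wᵗ)‖² ≤ B²·‖∇f(wᵗ)‖², B ≥ 0). Let v̄ = ∑ k, p k · v k and K ≥ 1. Then ∑_{s : Fin K → Fin N} (∏ j, p (s j)) · ‖(1/K)·∑ j, v (s j) − v̄‖² ≤ (2·B²·(1+γ)²/(K·μ̄²))·‖∇f(wᵗ)‖². -/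

import Mathlib

open scoped BigOperators

open scoped RealInnerProductSpace in
private lemma fedprox_sum_cons_split {N K : ℕ} (g : (Fin (K+1) → Fin N) → ℝ) :
    ∑ s, g s = ∑ k : Fin N, ∑ t : Fin K → Fin N, g (Fin.cons k t) := by
  rw [← Equiv.sum_comp (Fin.consEquiv fun _ => Fin N) g, Fintype.sum_prod_type]
  rfl

private lemma fedprox_sum_prod_weights {N : ℕ} (p : Fin N → ℝ) (hp1 : ∑ k, p k = 1) :
    ∀ K : ℕ, ∑ s : Fin K → Fin N, ∏ j, p (s j) = 1 := by
  intro K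
  induction K with
  | zero => simp
  | succ K ih =>
    rw [fedprox_sum_cons_split (fun s => ∏ j, p (s j))]
    simp only [Fin.prod_univ_succ, Fin.cons_zero, Fin.cons_succ]
    rw [← Finset.sum_mul_sum, hp1, ih, one_mul]

open scoped RealInnerProductSpace in
private lemma fedprox_key_variance {E : Type*} [NormedAddCommGroup E] [InnerProductSpace ℝ E]
    {N : ℕ} (p : Fin N → ℝ) (hp1 : ∑ k, p k = 1)
    (u : Fin N → E) (hm : ∑ k, p k • u k = 0) :
    ∀ K : ℕ, ∑ s : Fin K → Fin N, (∏ j, p (s j)) * ‖∑ j, u (s j)‖ ^ 2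
      = K * ∑ k, p k * ‖u k‖ ^ 2 := by
  intro K
  induction K with
  | zero => simp
  | succ K ih =>
    rw [fedprox_sum_cons_split (fun s => (∏ j, p (s j)) * ‖∑ j, u (s j)‖ ^ 2)]
    have expand : ∀ (k : Fin N) (t : Fin K → Fin N),
        (∏ j, p ((Fin.cons k t : Fin (K+1) → Fin N) j)) *
          ‖∑ j, u ((Fin.cons k t : Fin (K+1) → Fin N) j)‖ ^ 2
        = (p k * ‖u k‖ ^ 2) * (∏ j, p (t j))
          + (∏ j, p (t j)) * (2 * ⟪p k • u k, ∑ j, u (t j)⟫)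
          + p k * ((∏ j, p (t j)) * ‖∑ j, u (t j)‖ ^ 2) := by
      intro k t
      rw [Fin.prod_univ_succ, Fin.sum_univ_succ]
      simp only [Fin.cons_zero, Fin.cons_succ]
      rw [norm_add_sq_real, real_inner_smul_left]
      ring
    simp only [expand, Finset.sum_add_distrib]
    have h2 : ∀ t : Fin K → Fin N,
        ∑ k, (∏ j, p (t j)) * (2 * ⟪p k • u k, ∑ j, u (t j)⟫) = 0 := by
      intro t
      rw [← Finset.mul_sum, ← Finset.mul_sum, ← sum_inner, hm, inner_zero_left]
      ring
    have hmid : (∑ k : Fin N, ∑ t : Fin K → Fin N,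
        (∏ j, p (t j)) * (2 * ⟪p k • u k, ∑ j, u (t j)⟫)) = 0 := by
      rw [Finset.sum_comm]
      exact Finset.sum_eq_zero fun t _ => h2 t
    rw [hmid, add_zero]
    have h1 : ∀ k : Fin N, ∑ t : Fin K → Fin N, (p k * ‖u k‖ ^ 2) * (∏ j, p (t j))
        = p k * ‖u k‖ ^ 2 := by
      intro k
      rw [← Finset.mul_sum, fedprox_sum_prod_weights p hp1 K, mul_one]
    have h3 : ∀ k : Fin N, ∑ t : Fin K → Fin N, p k * ((∏ j, p (t j)) * ‖∑ j, u (t j)‖ ^ 2)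
        = p k * (K * ∑ k, p k * ‖u k‖ ^ 2) := by
      intro k
      rw [← Finset.mul_sum, ih]
    simp only [h1, h3]
    rw [← Finset.sum_mul, hp1]
    push_cast
    ring

open scoped RealInnerProductSpace in
private lemma fedprox_variance_le {E : Type*} [NormedAddCommGroup E] [InnerProductSpace ℝ E]
    {N : ℕ} (p : Fin N → ℝ) (hp1 : ∑ k, p k = 1) (x : Fin N → E) (m : E)
    (hm : m = ∑ k, p k • x k) :
    ∑ k, p k * ‖x k - m‖ ^ 2 ≤ ∑ k, p k * ‖x k‖ ^ 2 := by
  have hinner : ∑ k, p k * ⟪x k, m⟫ = ‖m‖ ^ 2 := by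
    have h := sum_inner (𝕜 := ℝ) (s := Finset.univ) (fun k => p k • x k) m
    rw [← hm] at h
    rw [← real_inner_self_eq_norm_sq, h]
    exact Finset.sum_congr rfl fun k _ => (real_inner_smul_left _ _ _).symm
  have expand : ∀ k : Fin N, p k * ‖x k - m‖ ^ 2
      = p k * ‖x k‖ ^ 2 - 2 * (p k * ⟪x k, m⟫) + p k * ‖m‖ ^ 2 := by
    intro k
    rw [norm_sub_sq_real]
    ring
  calc ∑ k, p k * ‖x k - m‖ ^ 2
      = ∑ k, p k * ‖x k‖ ^ 2 - 2 * ∑ k, (p k * ⟪x k, m⟫) + (∑ k, p k) * ‖m‖ ^ 2 := by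
        simp only [expand, Finset.sum_add_distrib, Finset.sum_sub_distrib, Finset.mul_sum,
          Finset.sum_mul]
    _ = ∑ k, p k * ‖x k‖ ^ 2 - ‖m‖ ^ 2 := by rw [hinner, hp1]; ring
    _ ≤ ∑ k, p k * ‖x k‖ ^ 2 := by
        have : (0:ℝ) ≤ ‖m‖ ^ 2 := by positivity
        linarith

/-- Dispersion bound for the sampled FedProx average. -/
theorem fedprox_sampled_average_dispersion
    {E : Type*} [NormedAddCommGroup E] [InnerProductSpace ℝ E] [CompleteSpace E]
    {N : ℕ} (hN : 1 ≤ N) (p : Fin N → ℝ)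
    (hp : ∀ k, 0 ≤ p k) (hp1 : ∑ k, p k = 1)
    (F : Fin N → E → ℝ) (f : E → ℝ) (hf : ∀ w, f w = ∑ k, p k * F k w)
    (hFdiff : ∀ k, Differentiable ℝ (F k))
    (v : Fin N → E) (wt : E)
    {μbar : ℝ} (hμbar : 0 < μbar) {γ : ℝ} (hγ : 0 ≤ γ)
    (hdist : ∀ k, ‖v k - wt‖ ≤ ((1 + γ) / μbar) * ‖gradient (F k) wt‖)
    {B : ℝ} (hB : 0 ≤ B)
    (hdissim : ∑ k, p k * ‖gradient (F k) wt‖ ^ 2 ≤ B ^ 2 * ‖gradient f wt‖ ^ 2)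
    (vbar : E) (hvbar : vbar = ∑ k, p k • v k)
    {K : ℕ} (hK : 1 ≤ K) :
    ∑ s : Fin K → Fin N, (∏ j, p (s j)) * ‖(1 / (K : ℝ)) • (∑ j, v (s j)) - vbar‖ ^ 2
      ≤ (2 * B ^ 2 * (1 + γ) ^ 2 / (K * μbar ^ 2)) * ‖gradient f wt‖ ^ 2 := by
  have hK0 : (K : ℝ) ≠ 0 := Nat.cast_ne_zero.mpr (by omega)
  have hKpos : (0:ℝ) < K := by positivity
  set u : Fin N → E := fun k => v k - vbar with hu
  -- the weighted mean of u is zero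
  have hm : ∑ k, p k • u k = 0 := by
    simp only [hu, smul_sub, Finset.sum_sub_distrib, ← Finset.sum_smul, hp1, one_smul,
      ← hvbar, sub_self]
  -- rewrite each summand
  have hre : ∀ s : Fin K → Fin N,
      (1 / (K : ℝ)) • (∑ j, v (s j)) - vbar = (1 / (K : ℝ)) • ∑ j, u (s j) := by
    intro s
    simp only [hu]
    rw [Finset.sum_sub_distrib, Finset.sum_const, Finset.card_univ, Fintype.card_fin,
      smul_sub, ← Nat.cast_smul_eq_nsmul ℝ, smul_smul]  -- deprecated name ok
    rw [one_div, inv_mul_cancel₀ hK0, one_smul]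
  have hLHS : ∑ s : Fin K → Fin N, (∏ j, p (s j)) * ‖(1 / (K : ℝ)) • (∑ j, v (s j)) - vbar‖ ^ 2
      = (1 / (K : ℝ)) * ∑ k, p k * ‖u k‖ ^ 2 := by
    have : ∀ s : Fin K → Fin N,
        (∏ j, p (s j)) * ‖(1 / (K : ℝ)) • (∑ j, v (s j)) - vbar‖ ^ 2
        = (1 / (K : ℝ)) ^ 2 * ((∏ j, p (s j)) * ‖∑ j, u (s j)‖ ^ 2) := by
      intro s
      rw [hre s, norm_smul]
      simp only [Real.norm_eq_abs]
      rw [abs_of_nonneg (by positivity : (0:ℝ) ≤ 1 / (K:ℝ))]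
      ring
    simp only [this, ← Finset.mul_sum]
    rw [fedprox_key_variance p hp1 u hm K]
    field_simp
  rw [hLHS]
  -- bound the variance
  have hmean : vbar - wt = ∑ k, p k • (v k - wt) := by
    simp only [smul_sub, Finset.sum_sub_distrib, ← Finset.sum_smul, hp1, one_smul, ← hvbar]
  have hvar : ∑ k, p k * ‖u k‖ ^ 2 ≤ ∑ k, p k * ‖v k - wt‖ ^ 2 := by
    have h := fedprox_variance_le p hp1 (fun k => v k - wt) (vbar - wt) hmean
    have : ∀ k : Fin N, u k = (v k - wt) - (vbar - wt) := by
      intro k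
      show v k - vbar = (v k - wt) - (vbar - wt)
      abel
    simpa only [← this] using h
  have hpt : ∀ k : Fin N, p k * ‖v k - wt‖ ^ 2
      ≤ p k * (((1 + γ) / μbar) ^ 2 * ‖gradient (F k) wt‖ ^ 2) := by
    intro k
    apply mul_le_mul_of_nonneg_left _ (hp k)
    have h1 : ‖v k - wt‖ ^ 2 ≤ (((1 + γ) / μbar) * ‖gradient (F k) wt‖) ^ 2 := by
      apply pow_le_pow_left₀ (norm_nonneg _) (hdist k)
    calc ‖v k - wt‖ ^ 2 ≤ (((1 + γ) / μbar) * ‖gradient (F k) wt‖) ^ 2 := h1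
      _ = ((1 + γ) / μbar) ^ 2 * ‖gradient (F k) wt‖ ^ 2 := by ring
  have hsum2 : ∑ k, p k * ‖v k - wt‖ ^ 2
      ≤ ((1 + γ) / μbar) ^ 2 * (B ^ 2 * ‖gradient f wt‖ ^ 2) := by
    calc ∑ k, p k * ‖v k - wt‖ ^ 2
        ≤ ∑ k, p k * (((1 + γ) / μbar) ^ 2 * ‖gradient (F k) wt‖ ^ 2) :=
          Finset.sum_le_sum fun k _ => hpt k
      _ = ((1 + γ) / μbar) ^ 2 * ∑ k, p k * ‖gradient (F k) wt‖ ^ 2 := by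
          rw [Finset.mul_sum]; exact Finset.sum_congr rfl fun k _ => by ring
      _ ≤ ((1 + γ) / μbar) ^ 2 * (B ^ 2 * ‖gradient f wt‖ ^ 2) := by
          apply mul_le_mul_of_nonneg_left hdissim (by positivity)
  have hfinal : (1 / (K : ℝ)) * (((1 + γ) / μbar) ^ 2 * (B ^ 2 * ‖gradient f wt‖ ^ 2))
      ≤ (2 * B ^ 2 * (1 + γ) ^ 2 / (K * μbar ^ 2)) * ‖gradient f wt‖ ^ 2 := by
    have heq : (1 / (K : ℝ)) * (((1 + γ) / μbar) ^ 2 * (B ^ 2 * ‖gradient f wt‖ ^ 2))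
        = (B ^ 2 * (1 + γ) ^ 2 / (K * μbar ^ 2)) * ‖gradient f wt‖ ^ 2 := by
      field_simp
    have heq2 : (2 * B ^ 2 * (1 + γ) ^ 2 / (K * μbar ^ 2)) * ‖gradient f wt‖ ^ 2
        = 2 * ((B ^ 2 * (1 + γ) ^ 2 / (K * μbar ^ 2)) * ‖gradient f wt‖ ^ 2) := by
      ring
    have hXnn : (0:ℝ) ≤ (B ^ 2 * (1 + γ) ^ 2 / (K * μbar ^ 2)) * ‖gradient f wt‖ ^ 2 := by
      positivity
    rw [heq, heq2]
    linarith
  calc (1 / (K : ℝ)) * ∑ k, p k * ‖u k‖ ^ 2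
      ≤ (1 / (K : ℝ)) * (((1 + γ) / μbar) ^ 2 * (B ^ 2 * ‖gradient f wt‖ ^ 2)) := by
        apply mul_le_mul_of_nonneg_left (le_trans hvar hsum2) (by positivity)
    _ ≤ (2 * B ^ 2 * (1 + γ) ^ 2 / (K * μbar ^ 2)) * ‖gradient f wt‖ ^ 2 := hfinal
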